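/- For every dimension d ≥ 1 and every n ≥ 1, M_d(n,n) ≤ E_d(2n). -/

import Mathlib

open Pointwise Filter

noncomputable section

/-- A set in `ℝ^d` is convexly independent if no point of it lies in the
convex hull of the other points. -/
def ConvInd {d : ℕ} (S : Set (Fin d → ℝ)) : Prop :=
  ∀ p ∈ S, p ∉ convexHull ℝ (S \ {p})

/-- `Efun d n` : the maximum, over `n`-point sets `P ⊂ ℝ^d`, of the number of
unordered pairs of distinct points of `P` whose midpoints are pairwise distinct
and form a convexly independent set.  Unordered pairs are encoded as ordered
pairs with the reversed pair excluded. -/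
def Efun (d n : ℕ) : ℕ :=
  sSup {k | ∃ (P : Finset (Fin d → ℝ)) (T : Finset ((Fin d → ℝ) × (Fin d → ℝ))),
    P.card = n ∧
    (∀ e ∈ T, e.1 ∈ P ∧ e.2 ∈ P ∧ e.1 ≠ e.2 ∧ (e.2, e.1) ∉ T) ∧
    Set.InjOn (fun e : (Fin d → ℝ) × (Fin d → ℝ) => midpoint ℝ e.1 e.2) ↑T ∧
    ConvInd ((fun e : (Fin d → ℝ) × (Fin d → ℝ) => midpoint ℝ e.1 e.2) '' ↑T) ∧
    T.card = k}

/-- `Mfun d m n` : the maximum, over `m`-point sets `P` and `n`-point sets `Q` in `ℝ^d`,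
of the size of a convexly independent subset of the Minkowski sum `P + Q`. -/
def Mfun (d m n : ℕ) : ℕ :=
  sSup {k | ∃ P Q S : Finset (Fin d → ℝ),
    P.card = m ∧ Q.card = n ∧
    (S : Set (Fin d → ℝ)) ⊆ (P : Set (Fin d → ℝ)) + (Q : Set (Fin d → ℝ)) ∧
    ConvInd (S : Set (Fin d → ℝ)) ∧ S.card = k}

/-- A norm on `ℝ^d` whose unit ball is strictly convex (the unit sphere contains
no nondegenerate segment, expressed via midpoints of distinct unit vectors). -/
structure StrictNorm (d : ℕ) where
  toFun : (Fin d → ℝ) → ℝ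
  eq_zero_iff : ∀ x, toFun x = 0 ↔ x = 0
  smul_eq : ∀ (a : ℝ) (x : Fin d → ℝ), toFun (a • x) = |a| * toFun x
  add_le : ∀ x y, toFun (x + y) ≤ toFun x + toFun y
  strictly_convex : ∀ x y, toFun x = 1 → toFun y = 1 → x ≠ y →
    toFun ((1 / 2 : ℝ) • (x + y)) < 1

/-- A (not necessarily strictly convex) norm on `ℝ^d`. -/
structure NormOn (d : ℕ) where
  toFun : (Fin d → ℝ) → ℝ
  eq_zero_iff : ∀ x, toFun x = 0 ↔ x = 0
  smul_eq : ∀ (a : ℝ) (x : Fin d → ℝ), toFun (a • x) = |a| * toFun x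
  add_le : ∀ x y, toFun (x + y) ≤ toFun x + toFun y

/-- `Wfun d n` : the maximum, over `n`-point sets `S ⊂ ℝ^d` and strictly convex
norms on `ℝ^d`, of the number of pairwise nonparallel unit-distance pairs in `S`.
(The nonparallelity condition between distinct ordered pairs automatically rules
out listing any unordered pair twice.) -/
def Wfun (d n : ℕ) : ℕ :=
  sSup {k | ∃ (S : Finset (Fin d → ℝ)) (ν : StrictNorm d)
      (T : Finset ((Fin d → ℝ) × (Fin d → ℝ))),
    S.card = n ∧
    (∀ e ∈ T, e.1 ∈ S ∧ e.2 ∈ S ∧ ν.toFun (e.1 - e.2) = 1) ∧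
    (∀ e ∈ T, ∀ f ∈ T, e ≠ f → ∀ c : ℝ, e.1 - e.2 ≠ c • (f.1 - f.2)) ∧
    T.card = k}

/-- `Ufun d n` : the maximum, over `n`-point sets `S ⊂ ℝ^d` and strictly convex
norms on `ℝ^d`, of the number of unordered unit-distance pairs in `S`. -/
def Ufun (d n : ℕ) : ℕ :=
  sSup {k | ∃ (S : Finset (Fin d → ℝ)) (ν : StrictNorm d)
      (T : Finset ((Fin d → ℝ) × (Fin d → ℝ))),
    S.card = n ∧
    (∀ e ∈ T, e.1 ∈ S ∧ e.2 ∈ S ∧ e.1 ≠ e.2 ∧ ν.toFun (e.1 - e.2) = 1 ∧ (e.2, e.1) ∉ T) ∧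
    T.card = k}

/-- `Dfun d n` : the maximum, over `n`-point sets `S ⊂ ℝ^d` and strictly convex
norms on `ℝ^d`, of the number of unordered diameter pairs in `S` (pairs of points
whose distance equals the diameter `D` of `S` in the norm). -/
def Dfun (d n : ℕ) : ℕ :=
  sSup {k | ∃ (S : Finset (Fin d → ℝ)) (ν : StrictNorm d)
      (T : Finset ((Fin d → ℝ) × (Fin d → ℝ))) (D : ℝ),
    S.card = n ∧
    (∀ p ∈ S, ∀ q ∈ S, ν.toFun (p - q) ≤ D) ∧
    (∃ p ∈ S, ∃ q ∈ S, ν.toFun (p - q) = D) ∧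
    (∀ e ∈ T, e.1 ∈ S ∧ e.2 ∈ S ∧ e.1 ≠ e.2 ∧ ν.toFun (e.1 - e.2) = D ∧ (e.2, e.1) ∉ T) ∧
    T.card = k}

/-- A family of sets in `ℝ^d` is strictly antipodal if for each pair of points
`p ∈ A i`, `q ∈ A j` with `i ≠ j` there is a linear functional `φ` with
`φ p < φ r < φ q` for every other point `r` of the union. -/
def StrictlyAntipodal {d : ℕ} {ι : Type*} (A : ι → Set (Fin d → ℝ)) : Prop :=
  ∀ i j, i ≠ j → ∀ p ∈ A i, ∀ q ∈ A j, ∃ φ : (Fin d → ℝ) →ₗ[ℝ] ℝ,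
    ∀ r ∈ ⋃ t, A t, r ≠ p → r ≠ q → φ p < φ r ∧ φ r < φ q

/-- `aconst d` = `a(d)` : the largest `k` such that for every `m` there is a strictly
antipodal family of `k` sets in `ℝ^d`, each of size at least `m`. -/
def aconst (d : ℕ) : ℕ :=
  sSup {k | ∀ m : ℕ, ∃ A : Fin k → Finset (Fin d → ℝ),
    (∀ i, m ≤ (A i).card) ∧ StrictlyAntipodal (fun i => ((A i : Set (Fin d → ℝ))))}

/-- The set of midpoints between points in different members of a family of finite sets. -/
def midSet {d : ℕ} {ι : Type*} (B : ι → Finset (Fin d → ℝ)) : Set (Fin d → ℝ) :=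
  {x | ∃ i j, i ≠ j ∧ ∃ p ∈ B i, ∃ q ∈ B j, x = midpoint ℝ p q}

/-- The set of differences between points in different members of a family of sets. -/
def diffSet {d : ℕ} {ι : Type*} (A : ι → Set (Fin d → ℝ)) : Set (Fin d → ℝ) :=
  {x | ∃ i j, i ≠ j ∧ ∃ p ∈ A i, ∃ q ∈ A j, x = p - q}

lemma convInd_translate {d : ℕ} (t : Fin d → ℝ) {S : Set (Fin d → ℝ)}
    (h : ConvInd S) : ConvInd ((fun x => x + t) '' S) := by
  rintro p ⟨s, hs, rfl⟩ hcon
  have hinj : Function.Injective (fun x : Fin d → ℝ => x + t) :=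
    fun a b hab => by simpa using hab
  have himg : (fun x => x + t) '' S \ {s + t} = (fun x => x + t) '' (S \ {s}) := by
    rw [Set.image_diff hinj, Set.image_singleton]
  rw [himg] at hcon
  have h2 : (fun x : Fin d → ℝ => x + t) '' (S \ {s}) = (S \ {s}) + {t} := by
    rw [Set.add_singleton]
  rw [h2, convexHull_add, convexHull_singleton] at hcon
  obtain ⟨y, hy, t', ht', hyt⟩ := hcon
  rcases ht' with rfl
  have : y = s := by simpa using congrArg (fun z => z - t') hyt
  exact h s hs (this ▸ hy)

lemma efun_bddAbove (d n : ℕ) :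
    BddAbove {k | ∃ (P : Finset (Fin d → ℝ)) (T : Finset ((Fin d → ℝ) × (Fin d → ℝ))),
    P.card = n ∧
    (∀ e ∈ T, e.1 ∈ P ∧ e.2 ∈ P ∧ e.1 ≠ e.2 ∧ (e.2, e.1) ∉ T) ∧
    Set.InjOn (fun e : (Fin d → ℝ) × (Fin d → ℝ) => midpoint ℝ e.1 e.2) ↑T ∧
    ConvInd ((fun e : (Fin d → ℝ) × (Fin d → ℝ) => midpoint ℝ e.1 e.2) '' ↑T) ∧
    T.card = k} := by
  refine ⟨n * n, ?_⟩
  rintro k ⟨P, T, hP, hT, -, -, rfl⟩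
  classical
  have hsub : T ⊆ P ×ˢ P := by
    intro e he
    obtain ⟨h1, h2, -, -⟩ := hT e he
    exact Finset.mem_product.2 ⟨h1, h2⟩
  calc T.card ≤ (P ×ˢ P).card := Finset.card_le_card hsub
    _ = n * n := by rw [Finset.card_product, hP]

/-- For every `d ≥ 1` and `n ≥ 1`, `M_d(n,n) ≤ E_d(2n)`. -/
theorem M_le_E_two (d n : ℕ) (hd : 1 ≤ d) (hn : 1 ≤ n) :
    Mfun d n n ≤ Efun d (2 * n) := by
  classical
  apply csSup_le'
  rintro k ⟨P, Q, S, hP, hQ, hSsub, hCI, hk⟩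
  -- choose a generic translation t
  haveI : Nonempty (Fin d) := ⟨⟨0, hd⟩⟩
  obtain ⟨t, ht⟩ := Infinite.exists_notMem_finset ((P ×ˢ Q).image (fun e => e.1 - e.2))
  have ht' : ∀ p ∈ P, ∀ q ∈ Q, t ≠ p - q := by
    intro p hp q hq h
    exact ht (Finset.mem_image.2 ⟨(p, q), Finset.mem_product.2 ⟨hp, hq⟩, h.symm⟩)
  -- choose decompositions
  have hdec : ∀ s : Fin d → ℝ, ∃ p q : Fin d → ℝ, s ∈ S → p ∈ P ∧ q ∈ Q ∧ p + q = s := by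
    intro s
    by_cases hs : s ∈ S
    · obtain ⟨p, hp, q, hq, hpq⟩ := hSsub hs
      exact ⟨p, q, fun _ => ⟨hp, hq, hpq⟩⟩
    · exact ⟨0, 0, fun h => absurd h hs⟩
  choose p q hpq using hdec
  set f : (Fin d → ℝ) → (Fin d → ℝ) := fun x => (2:ℝ) • x with hf
  have hfin : Function.Injective f := smul_right_injective _ (by norm_num)
  set g : (Fin d → ℝ) → (Fin d → ℝ) × (Fin d → ℝ) :=
    fun s => ((2:ℝ) • p s, (2:ℝ) • q s + (2:ℝ) • t) with hg
  set P₂ : Finset (Fin d → ℝ) := P.image f with hP₂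
  set Q₂ : Finset (Fin d → ℝ) := Q.image (fun x => (2:ℝ) • x + (2:ℝ) • t) with hQ₂
  have hdisj : Disjoint P₂ Q₂ := by
    rw [Finset.disjoint_left]
    rintro a ha hb
    obtain ⟨x, hx, rfl⟩ := Finset.mem_image.1 ha
    obtain ⟨y, hy, hxy⟩ := Finset.mem_image.1 hb
    apply ht' x hx y hy
    have hxy' : (2:ℝ) • y + (2:ℝ) • t = (2:ℝ) • x := hxy
    have : (2:ℝ) • t = (2:ℝ) • x - (2:ℝ) • y := by
      rw [← hxy']; abel
    have := congrArg (fun z => (2:ℝ)⁻¹ • z) this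
    simpa [smul_smul, smul_sub] using this
  set R : Finset (Fin d → ℝ) := P₂ ∪ Q₂ with hR
  have hRcard : R.card = 2 * n := by
    rw [hR, Finset.card_union_of_disjoint hdisj, hP₂, hQ₂,
      Finset.card_image_of_injective _ hfin,
      Finset.card_image_of_injective _
        (fun a b hab => by
          have : (2:ℝ) • a = (2:ℝ) • b := by
            have := hab; simpa using congrArg (fun z => z - (2:ℝ) • t) this
          exact hfin this),
      hP, hQ]
    ring
  -- the edge set
  set T : Finset ((Fin d → ℝ) × (Fin d → ℝ)) := S.image g with hTdef
  -- midpoint of g s is s + t for s ∈ S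
  have hmid : ∀ s ∈ S, midpoint ℝ (g s).1 (g s).2 = s + t := by
    intro s hs
    obtain ⟨hp, hq, hsum⟩ := hpq s hs
    show midpoint ℝ ((2:ℝ) • p s) ((2:ℝ) • q s + (2:ℝ) • t) = s + t
    have key : midpoint ℝ ((2:ℝ) • p s) ((2:ℝ) • q s + (2:ℝ) • t) = (p s + q s) + t := by
      rw [midpoint_eq_smul_add, invOf_eq_inv]
      module
    rw [key, hsum]
  have hgInj : Set.InjOn g ↑S := by
    intro a ha b hb hab
    have h1 := hmid a ha
    have h2 := hmid b hb
    have : a + t = b + t := by rw [← h1, ← h2, hab]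
    simpa using congrArg (fun z => z - t) this
  have hTcard : T.card = k := by
    rw [hTdef, Finset.card_image_of_injOn hgInj, hk]
  -- membership of endpoints
  have hmemP₂ : ∀ s ∈ S, (g s).1 ∈ P₂ := by
    intro s hs
    exact Finset.mem_image.2 ⟨p s, (hpq s hs).1, rfl⟩
  have hmemQ₂ : ∀ s ∈ S, (g s).2 ∈ Q₂ := by
    intro s hs
    exact Finset.mem_image.2 ⟨q s, (hpq s hs).2.1, rfl⟩
  refine le_csSup (efun_bddAbove d (2 * n)) ⟨R, T, hRcard, ?_, ?_, ?_, hTcard⟩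
  · -- edge conditions
    intro e he
    rw [hTdef, Finset.mem_image] at he
    obtain ⟨s, hs, rfl⟩ := he
    refine ⟨Finset.mem_union_left _ (hmemP₂ s hs),
      Finset.mem_union_right _ (hmemQ₂ s hs), ?_, ?_⟩
    · intro h
      exact (Finset.disjoint_left.1 hdisj) (hmemP₂ s hs) (h ▸ hmemQ₂ s hs)
    · intro h
      rw [hTdef, Finset.mem_image] at h
      obtain ⟨s', hs', hgs'⟩ := h
      have h1 : (g s').1 = (g s).2 := by rw [hgs']
      exact (Finset.disjoint_left.1 hdisj) (hmemP₂ s' hs') (h1 ▸ hmemQ₂ s hs)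
  · -- injectivity of midpoints
    intro e he f' hf' hef
    rw [hTdef] at he hf'
    simp only [Finset.coe_image, Set.mem_image, Finset.mem_coe] at he hf'
    obtain ⟨a, ha, rfl⟩ := he
    obtain ⟨b, hb, rfl⟩ := hf'
    have : a + t = b + t := by
      have h1 := hmid a ha
      have h2 := hmid b hb
      rw [← h1, ← h2]; exact hef
    have : a = b := by simpa using congrArg (fun z => z - t) this
    rw [this]
  · -- convex independence of midpoints
    have himg : (fun e : (Fin d → ℝ) × (Fin d → ℝ) => midpoint ℝ e.1 e.2) '' ↑T
        = (fun x => x + t) '' ↑S := by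
      rw [hTdef, Finset.coe_image, Set.image_image]
      exact Set.image_congr fun s hs => hmid s hs
    rw [himg]
    exact convInd_translate t hCI
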